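/- The set of unitary elements of a unital C*-algebra A is complete with respect to the metric d_U(u,v) := inf over unitaries w of ‖wuw* − v‖; in particular, every d_U-Cauchy sequence of unitaries has a subsequence realized (after conjugation) as a norm-Cauchy sequence, and the d_U-limit is a unitary of A. -/

import Mathlib

/-- The pseudometric `d_U(u,v) = inf_w ‖w u w* − v‖` on the unitary group. -/
noncomputable def dU {A : Type*} [CStarAlgebra A] (u v : unitary A) : ℝ :=
  ⨅ w : unitary A, ‖(w : A) * (u : A) * star (w : A) - (v : A)‖

lemma dU_le {A : Type*} [CStarAlgebra A] (u v : unitary A) (w : unitary A) :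
    dU u v ≤ ‖(w : A) * (u : A) * star (w : A) - (v : A)‖ :=
  ciInf_le ⟨0, by rintro x ⟨w, rfl⟩; positivity⟩ w

lemma dU_nonneg {A : Type*} [CStarAlgebra A] (u v : unitary A) : 0 ≤ dU u v :=
  le_ciInf fun _ => norm_nonneg _

lemma exists_conj_lt {A : Type*} [CStarAlgebra A] {u v : unitary A} {ε : ℝ}
    (h : dU u v < ε) :
    ∃ w : unitary A, ‖(w : A) * (u : A) * star (w : A) - (v : A)‖ < ε :=
  exists_lt_of_ciInf_lt h

lemma norm_conj {A : Type*} [CStarAlgebra A] (w : unitary A) (a : A) :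
    ‖(w : A) * a * star (w : A)‖ = ‖a‖ := by
  rw [mul_assoc, CStarRing.norm_coe_unitary_mul,
    CStarRing.norm_mul_mem_unitary a (Unitary.star_mem w.prop)]

theorem unitary_complete_dU (A : Type*) [CStarAlgebra A] (u : ℕ → unitary A)
    (hcauchy : ∀ ε > (0 : ℝ), ∃ N, ∀ m ≥ N, ∀ n ≥ N, dU (u m) (u n) < ε) :
    (∃ v : unitary A, Filter.Tendsto (fun n => dU (u n) v) Filter.atTop (nhds 0)) ∧
      ∃ φ : ℕ → ℕ, StrictMono φ ∧ ∃ w : ℕ → unitary A,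
        CauchySeq fun n => (w n : A) * (u (φ n) : A) * star (w n : A) := by
  -- choose thresholds
  have hNex : ∀ k : ℕ, ∃ N, ∀ m ≥ N, ∀ n ≥ N, dU (u m) (u n) < (1/2 : ℝ)^k :=
    fun k => hcauchy _ (by positivity)
  choose N hN using hNex
  -- the subsequence
  set φ : ℕ → ℕ := fun n => Nat.rec (N 0) (fun n ih => max (ih + 1) (N (n + 1))) n with hφdef
  have hφsucc : ∀ n, φ (n + 1) = max (φ n + 1) (N (n + 1)) := fun n => rfl
  have hφmono : StrictMono φ := by
    apply strictMono_nat_of_lt_succ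
    intro n
    rw [hφsucc]
    exact lt_of_lt_of_le (Nat.lt_succ_self _) (le_max_left _ _)
  have hφN : ∀ n, N n ≤ φ n := by
    intro n
    cases n with
    | zero => exact le_refl _
    | succ n => rw [hφsucc]; exact le_max_right _ _
  have hstep : ∀ n, dU (u (φ n)) (u (φ (n + 1))) < (1/2 : ℝ)^n := by
    intro n
    exact hN n _ (hφN n) _ (le_trans (hφN n) (le_of_lt (hφmono (Nat.lt_succ_self n))))
  -- choose conjugating unitaries between consecutive terms
  have hzex : ∀ n, ∃ z : unitary A,
      ‖(z : A) * (u (φ n) : A) * star (z : A) - (u (φ (n + 1)) : A)‖ < (1/2 : ℝ)^n :=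
    fun n => exists_conj_lt (hstep n)
  choose z hz using hzex
  -- cumulative conjugators
  set w : ℕ → unitary A := fun n => Nat.rec 1 (fun n ih => ih * star (z n)) n with hwdef
  have hwsucc : ∀ n, w (n + 1) = w n * star (z n) := fun n => rfl
  set V : ℕ → unitary A := fun n => w n * u (φ n) * star (w n) with hVdef
  have hVcoe : ∀ n, (V n : A) = (w n : A) * (u (φ n) : A) * star (w n : A) := fun n => rfl
  -- key estimate
  have hdist : ∀ n, ‖(V n : A) - (V (n + 1) : A)‖ < (1/2 : ℝ)^n := by
    intro n
    have hw1 : (w n : A) = (w (n + 1) : A) * (z n : A) := by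
      rw [hwsucc]
      push_cast
      rw [mul_assoc, Unitary.coe_star_mul_self (z n), mul_one]
    have key : (V n : A) - (V (n + 1) : A) =
        (w (n + 1) : A) * ((z n : A) * (u (φ n) : A) * star (z n : A) - (u (φ (n + 1)) : A))
          * star (w (n + 1) : A) := by
      show (w n : A) * (u (φ n) : A) * star (w n : A)
          - ((w (n+1) : A) * (u (φ (n+1)) : A) * star (w (n+1) : A)) = _
      rw [hw1]
      simp only [Unitary.coe_star, star_mul, star_star]
      noncomm_ring
    rw [key, norm_conj]
    exact hz n
  -- norm-Cauchy
  have hVcauchy : CauchySeq (fun n => (V n : A)) := by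
    apply cauchySeq_of_le_geometric (1/2 : ℝ) 1 (by norm_num)
    intro n
    rw [dist_eq_norm, one_mul]
    exact le_of_lt (hdist n)
  -- limit
  obtain ⟨L, hL⟩ := cauchySeq_tendsto_of_complete hVcauchy
  have hLmem : L ∈ unitary A := by
    constructor
    · have h1 : Filter.Tendsto (fun n => star (V n : A) * (V n : A)) Filter.atTop
          (nhds (star L * L)) := ((continuous_star.tendsto L).comp hL).mul hL
      have h2 : (fun n => star (V n : A) * (V n : A)) = fun _ => (1 : A) := by
        funext n; exact (V n).prop.1
      rw [h2] at h1
      exact tendsto_nhds_unique h1 tendsto_const_nhds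
    · have h1 : Filter.Tendsto (fun n => (V n : A) * star (V n : A)) Filter.atTop
          (nhds (L * star L)) := hL.mul ((continuous_star.tendsto L).comp hL)
      have h2 : (fun n => (V n : A) * star (V n : A)) = fun _ => (1 : A) := by
        funext n; exact (V n).prop.2
      rw [h2] at h1
      exact tendsto_nhds_unique h1 tendsto_const_nhds
  refine ⟨⟨⟨L, hLmem⟩, ?_⟩, φ, hφmono, w, hVcauchy⟩
  -- dU (u n) L → 0
  rw [Metric.tendsto_atTop]
  intro ε hε
  obtain ⟨N', hN'⟩ := hcauchy (ε / 2) (by positivity)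
  obtain ⟨K, hK⟩ := (Metric.tendsto_atTop.mp hL) (ε / 2) (by positivity)
  set k := max K N' with hk
  have hφk : N' ≤ φ k := le_trans (le_max_right _ _) (hφmono.le_apply)
  have hVL : ‖(V k : A) - L‖ < ε / 2 := by
    have := hK k (le_max_left _ _)
    rwa [dist_eq_norm] at this
  refine ⟨N', fun n hn => ?_⟩
  have hdun : dU (u n) (u (φ k)) < ε / 2 := hN' n hn _ hφk
  obtain ⟨y, hy⟩ := exists_conj_lt hdun
  have hle : dU (u n) ⟨L, hLmem⟩ ≤
      ‖((w k * y : unitary A) : A) * (u n : A) * star ((w k * y : unitary A) : A) - L‖ :=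
    dU_le _ _ _
  have keyeq : ((w k * y : unitary A) : A) * (u n : A) * star ((w k * y : unitary A) : A) - L =
      (w k : A) * ((y : A) * (u n : A) * star (y : A) - (u (φ k) : A)) * star (w k : A)
        + ((V k : A) - L) := by
    rw [hVcoe]
    push_cast
    simp only [Unitary.coe_star, star_mul]
    noncomm_ring
  have hbound : ‖((w k * y : unitary A) : A) * (u n : A) * star ((w k * y : unitary A) : A) - L‖
      < ε := by
    rw [keyeq]
    calc _ ≤ ‖(w k : A) * ((y : A) * (u n : A) * star (y : A) - (u (φ k) : A)) * star (w k : A)‖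
            + ‖(V k : A) - L‖ := norm_add_le _ _
      _ < ε / 2 + ε / 2 := by
          apply add_lt_add _ hVL
          rw [norm_conj]
          exact hy
      _ = ε := add_halves ε
  have : dU (u n) ⟨L, hLmem⟩ < ε := lt_of_le_of_lt hle hbound
  rw [Real.dist_eq, sub_zero, abs_of_nonneg (dU_nonneg _ _)]
  exact this
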